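/- Let y be a random variable uniform on {−1, 1}, and conditionally on y let ỹ_1, …, ỹ_s ∈ {−1,1} be independent with P(ỹ_i = y | y) = q_i, where q_i ∈ [1/2,1]. Define the majority-vote error event E = ({y = 1} ∩ {∑_{i=1}^s ỹ_i ≤ 0}) ∪ ({y = −1} ∩ {∑_{i=1}^s ỹ_i > 0}). Then P(E) ≤ exp(−(∑_{i=1}^s (2q_i − 1))² / (2s)). That is, the average probability of error of majority voting with a uniform prior on the true label is at most exp(−(∑_i (2q_i−1))²/(2s)). -/

import Mathlib

open MeasureTheory ProbabilityTheory

section Aux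

open Real

/-- Two-point Hoeffding lemma: the mgf of a `{−1,1}`-valued random variable with mean `m`. -/
lemma two_point_hoeffding (m t : ℝ) (hm1 : -1 ≤ m) (hm2 : m ≤ 1) (ht : 0 ≤ t) :
    (1 + m) / 2 * exp t + (1 - m) / 2 * exp (-t) ≤ exp (m * t + t ^ 2 / 2) := by
  set a : ℝ := (1 + m) / 2 with ha_def
  set b : ℝ := (1 - m) / 2 with hb_def
  have ha : 0 ≤ a := by simp only [ha_def]; linarith
  have hb : 0 ≤ b := by simp only [hb_def]; linarith
  have hab : a + b = 1 := by simp only [ha_def, hb_def]; ring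
  set D : ℝ → ℝ := fun x => a * exp x + b * exp (-x) with hD_def
  set N : ℝ → ℝ := fun x => a * exp x - b * exp (-x) with hN_def
  have hDpos : ∀ x, 0 < D x := by
    intro x
    have h1 : exp (-|x|) ≤ exp x := exp_le_exp.2 (neg_abs_le x)
    have h2 : exp (-|x|) ≤ exp (-x) := exp_le_exp.2 (by simpa using neg_abs_le (-x))
    have h3 : 0 < exp (-|x|) := exp_pos _
    have h4 := mul_le_mul_of_nonneg_left h1 ha
    have h5 := mul_le_mul_of_nonneg_left h2 hb
    simp only [hD_def]
    nlinarith
  have hD : ∀ x, HasDerivAt D (N x) x := by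
    intro x
    have h1 : HasDerivAt (fun x => a * exp x) (a * exp x) x :=
      (Real.hasDerivAt_exp x).const_mul a
    have h2 : HasDerivAt (fun x => exp (-x)) (-exp (-x)) x := by
      simpa [Function.comp_def] using (Real.hasDerivAt_exp (-x)).comp x (hasDerivAt_neg x)
    have h3 : HasDerivAt (fun x => b * exp (-x)) (b * -exp (-x)) x := h2.const_mul b
    have h4 := h1.add h3
    refine h4.congr_deriv ?_
    simp only [hN_def]; ring
  have hN : ∀ x, HasDerivAt N (D x) x := by
    intro x
    have h1 : HasDerivAt (fun x => a * exp x) (a * exp x) x :=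
      (Real.hasDerivAt_exp x).const_mul a
    have h2 : HasDerivAt (fun x => exp (-x)) (-exp (-x)) x := by
      simpa [Function.comp_def] using (Real.hasDerivAt_exp (-x)).comp x (hasDerivAt_neg x)
    have h3 : HasDerivAt (fun x => b * exp (-x)) (b * -exp (-x)) x := h2.const_mul b
    have h4 := h1.sub h3
    refine h4.congr_deriv ?_
    simp only [hD_def]; ring
  set g1 : ℝ → ℝ := fun x => m + x - N x / D x with hg1_def
  have hg1 : ∀ x, HasDerivAt g1 ((N x / D x) ^ 2) x := by
    intro x
    have hdiv : HasDerivAt (fun x => N x / D x)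
        ((D x * D x - N x * N x) / D x ^ 2) x := (hN x).div (hD x) (hDpos x).ne'
    have hid : HasDerivAt (fun x : ℝ => m + x) 1 x := (hasDerivAt_id x).const_add m
    have h4 := hid.sub hdiv
    refine h4.congr_deriv ?_
    have hDne : D x ≠ 0 := (hDpos x).ne'
    field_simp
    ring
  have hg1mono : Monotone g1 :=
    monotone_of_deriv_nonneg (fun x => (hg1 x).differentiableAt)
      (fun x => by rw [(hg1 x).deriv]; positivity)
  have hD0 : D 0 = 1 := by simp [hD_def, hab]
  have hN0 : N 0 = m := by simp [hN_def]; simp only [ha_def, hb_def]; ring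
  have hg1zero : g1 0 = 0 := by simp [hg1_def, hD0, hN0]
  have hg1nonneg : ∀ x ∈ Set.Ici (0:ℝ), 0 ≤ g1 x := by
    intro x hx
    rw [← hg1zero]
    exact hg1mono hx
  set g : ℝ → ℝ := fun x => m * x + x ^ 2 / 2 - Real.log (D x) with hg_def
  have hg : ∀ x, HasDerivAt g (g1 x) x := by
    intro x
    have h1 : HasDerivAt (fun x : ℝ => m * x) m x := by
      simpa using (hasDerivAt_id x).const_mul m
    have h2 : HasDerivAt (fun x : ℝ => x ^ 2 / 2) x x := by
      have := (hasDerivAt_pow 2 x).div_const 2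
      simpa using this
    have h3 : HasDerivAt (fun x => Real.log (D x)) (N x / D x) x :=
      (hD x).log (hDpos x).ne'
    have h4 := (h1.add h2).sub h3
    exact h4
  have hgmono : MonotoneOn g (Set.Ici 0) := by
    apply monotoneOn_of_deriv_nonneg (convex_Ici 0)
      (fun x _ => (hg x).differentiableAt.continuousAt.continuousWithinAt)
      (fun x _ => (hg x).differentiableAt.differentiableWithinAt)
    intro x hx
    rw [(hg x).deriv]
    exact hg1nonneg x (le_of_lt (by simpa using hx))
  have hg0 : g 0 = 0 := by simp [hg_def, hD0]
  have hgt : 0 ≤ g t := by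
    rw [← hg0]
    exact hgmono (by simp) (by simpa using ht) ht
  have hlog : Real.log (D t) ≤ m * t + t ^ 2 / 2 := by
    simp only [hg_def] at hgt; linarith
  calc D t = exp (Real.log (D t)) := (exp_log (hDpos t)).symm
    _ ≤ exp (m * t + t ^ 2 / 2) := exp_le_exp.2 hlog

/-- Chernoff/Hoeffding bound for the lower tail of a sum of independent `{−1,1}`-valued
random variables. -/
lemma maj_vote_err {Ω : Type*} [MeasurableSpace Ω] (μ : Measure Ω) [IsProbabilityMeasure μ]
    (s : ℕ) (hs : 1 ≤ s) (X : Fin s → Ω → ℝ) (q : Fin s → ℝ)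
    (hq : ∀ i, q i ∈ Set.Icc (1 / 2 : ℝ) 1)
    (hXmeas : ∀ i, Measurable (X i)) (hXval : ∀ i ω, X i ω = -1 ∨ X i ω = 1)
    (hqX : ∀ i, μ {ω | X i ω = 1} = ENNReal.ofReal (q i))
    (hind : iIndepFun X μ) :
    μ {ω | ∑ i, X i ω ≤ 0} ≤
      ENNReal.ofReal (Real.exp (-(∑ i, (2 * q i - 1)) ^ 2 / (2 * s))) := by
  set M : ℝ := ∑ i, (2 * q i - 1) with hM_def
  have hMnn : 0 ≤ M := Finset.sum_nonneg fun i _ => by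
    have := hq i; simp at this; linarith [this.1]
  have hspos : (0:ℝ) < s := by exact_mod_cast hs
  set t : ℝ := M / s with ht_def
  have htnn : 0 ≤ t := div_nonneg hMnn hspos.le
  have hpt : ∀ i ω, exp (-t * X i ω) = Real.cosh t - Real.sinh t * X i ω := by
    intro i ω
    rcases hXval i ω with h | h <;> rw [h, Real.cosh_eq, Real.sinh_eq] <;> ring_nf
  have hXind : ∀ i, X i = fun ω =>
      2 * Set.indicator {ω | X i ω = 1} (fun _ => (1:ℝ)) ω - 1 := by
    intro i
    funext ω
    rcases hXval i ω with h | h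
    · rw [Set.indicator_of_notMem (by simp [Set.mem_setOf_eq, h]; norm_num), h]; ring
    · rw [Set.indicator_of_mem (by simp [Set.mem_setOf_eq, h]), h]; ring
  have hmeas1 : ∀ i, MeasurableSet {ω | X i ω = 1} := fun i =>
    (hXmeas i) (measurableSet_singleton 1)
  have hXint : ∀ i, Integrable (X i) μ := by
    intro i
    rw [hXind i]
    exact (((integrable_const (1:ℝ)).indicator (hmeas1 i)).const_mul 2).sub (integrable_const 1)
  have hXmean : ∀ i, ∫ ω, X i ω ∂μ = 2 * q i - 1 := by
    intro i
    have h0q : 0 ≤ q i := le_trans (by norm_num) (hq i).1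
    rw [hXind i]
    rw [integral_sub ((((integrable_const (1:ℝ)).indicator (hmeas1 i)).const_mul 2))
      (integrable_const 1)]
    rw [integral_const_mul, integral_indicator_const _ (hmeas1 i)]
    simp [Measure.real, hqX i, ENNReal.toReal_ofReal h0q]
  have hint : ∀ i, Integrable (fun ω => exp (-t * X i ω)) μ := by
    intro i
    simp_rw [hpt]
    exact (integrable_const _).sub ((hXint i).const_mul _)
  have hmgf : ∀ i, mgf (X i) μ (-t) ≤ exp (-(2 * q i - 1) * t + t ^ 2 / 2) := by
    intro i
    have : mgf (X i) μ (-t) = Real.cosh t - Real.sinh t * (2 * q i - 1) := by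
      rw [mgf]
      simp_rw [hpt]
      rw [integral_sub (integrable_const _) ((hXint i).const_mul _), integral_const,
        integral_const_mul, hXmean i]
      simp
    rw [this]
    have hquse := hq i
    simp only [Set.mem_Icc] at hquse
    have h2 := two_point_hoeffding (-(2 * q i - 1)) t (by linarith [hquse.2])
      (by linarith [hquse.1]) htnn
    rw [Real.cosh_eq, Real.sinh_eq]
    nlinarith [h2]
  have hintsum : Integrable (fun ω => exp (-t * (∑ i, X i) ω)) μ :=
    hind.integrable_exp_mul_sum hXmeas (fun i _ => hint i)
  have hcher := measure_le_le_exp_mul_mgf (μ := μ) (X := ∑ i, X i) (t := -t) 0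
    (neg_nonpos.2 htnn) hintsum
  rw [hind.mgf_sum hXmeas] at hcher
  have hprod : ∏ i, mgf (X i) μ (-t) ≤ ∏ i : Fin s, exp (-(2 * q i - 1) * t + t ^ 2 / 2) :=
    Finset.prod_le_prod (fun i _ => mgf_nonneg) (fun i _ => hmgf i)
  have hprodval : ∏ i : Fin s, exp (-(2 * q i - 1) * t + t ^ 2 / 2)
      = exp (-M ^ 2 / (2 * s)) := by
    rw [← Real.exp_sum]
    congr 1
    rw [Finset.sum_add_distrib, ← Finset.sum_mul]
    simp only [Finset.sum_const, Finset.card_univ, Fintype.card_fin, nsmul_eq_mul]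
    have : ∑ i : Fin s, -(2 * q i - 1) = -M := by rw [hM_def, ← Finset.sum_neg_distrib]
    rw [this, ht_def]
    field_simp
    ring
  have hfinal : (μ {ω | (∑ i, X i) ω ≤ 0}).toReal ≤ exp (-M ^ 2 / (2 * s)) := by
    calc (μ {ω | (∑ i, X i) ω ≤ 0}).toReal
        ≤ exp (-(-t) * 0) * ∏ i, mgf (X i) μ (-t) := hcher
      _ = ∏ i, mgf (X i) μ (-t) := by simp
      _ ≤ exp (-M ^ 2 / (2 * s)) := by rw [← hprodval]; exact hprod
  have hset : {ω | ∑ i, X i ω ≤ 0} = {ω | (∑ i, X i) ω ≤ 0} := by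
    ext ω; simp
  rw [hset, ← ENNReal.ofReal_toReal (measure_ne_top μ _)]
  exact ENNReal.ofReal_le_ofReal hfinal

end Aux

/-- Average probability of error of majority voting with a uniform prior on the true label
`y ∈ {−1, 1}`: if, conditionally on each value of `y`, the reported labels `Y i ∈ {−1,1}` are
independent and agree with `y` with probability `q i ∈ [1/2, 1]`, then the probability of the
majority-vote error event is at most `exp(−(∑ (2 q i − 1))² / (2 s))`. -/
theorem stmt_4 {Ω : Type*} [MeasurableSpace Ω] (P : Measure Ω) [IsProbabilityMeasure P]
    (s : ℕ) (hs : 1 ≤ s) (y : Ω → ℝ) (Y : Fin s → Ω → ℝ) (q : Fin s → ℝ)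
    (hq : ∀ i, q i ∈ Set.Icc (1 / 2 : ℝ) 1)
    (hymeas : Measurable y) (hYmeas : ∀ i, Measurable (Y i))
    (hyval : ∀ ω, y ω = -1 ∨ y ω = 1)
    (hYval : ∀ i ω, Y i ω = -1 ∨ Y i ω = 1)
    (hprior : P {ω | y ω = 1} = ENNReal.ofReal (1 / 2))
    (hcondPlus : iIndepFun Y (P[|{ω | y ω = 1}]))
    (hcondMinus : iIndepFun Y (P[|{ω | y ω = -1}]))
    (hqPlus : ∀ i, (P[|{ω | y ω = 1}]) {ω | Y i ω = 1} = ENNReal.ofReal (q i))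
    (hqMinus : ∀ i, (P[|{ω | y ω = -1}]) {ω | Y i ω = -1} = ENNReal.ofReal (q i)) :
    P (({ω | y ω = 1} ∩ {ω | ∑ i, Y i ω ≤ 0}) ∪
        ({ω | y ω = -1} ∩ {ω | 0 < ∑ i, Y i ω})) ≤
      ENNReal.ofReal (Real.exp (-(∑ i, (2 * q i - 1)) ^ 2 / (2 * s))) := by
  set A : Set Ω := {ω | y ω = 1} with hA_def
  set Am : Set Ω := {ω | y ω = -1} with hAm_def
  have hAmeas : MeasurableSet A := hymeas (measurableSet_singleton 1)
  have hAmmeas : MeasurableSet Am := hymeas (measurableSet_singleton (-1))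
  have hAm_compl : Am = Aᶜ := by
    ext ω
    simp only [hA_def, hAm_def, Set.mem_setOf_eq, Set.mem_compl_iff]
    rcases hyval ω with h | h <;> simp [h] <;> norm_num
  have hPA : P A = ENNReal.ofReal (1 / 2) := hprior
  have hPAm : P Am = ENNReal.ofReal (1 / 2) := by
    rw [hAm_compl, measure_compl hAmeas (measure_ne_top _ _), measure_univ, hPA,
      ← ENNReal.ofReal_one, ← ENNReal.ofReal_sub _ (by norm_num)]
    norm_num
  have hA0 : P A ≠ 0 := by rw [hPA]; simp
  have hAm0 : P Am ≠ 0 := by rw [hPAm]; simp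
  haveI : IsProbabilityMeasure (P[|A]) := cond_isProbabilityMeasure hA0
  haveI : IsProbabilityMeasure (P[|Am]) := cond_isProbabilityMeasure hAm0
  -- conditional bound on the plus event
  have bound1 : (P[|A]) {ω | ∑ i, Y i ω ≤ 0} ≤
      ENNReal.ofReal (Real.exp (-(∑ i, (2 * q i - 1)) ^ 2 / (2 * s))) :=
    maj_vote_err (P[|A]) s hs Y q hq hYmeas hYval hqPlus hcondPlus
  -- conditional bound on the minus event
  have bound2 : (P[|Am]) {ω | 0 < ∑ i, Y i ω} ≤
      ENNReal.ofReal (Real.exp (-(∑ i, (2 * q i - 1)) ^ 2 / (2 * s))) := by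
    have hind' : iIndepFun (fun i ω => -Y i ω) (P[|Am]) :=
      hcondMinus.comp (fun _ => (Neg.neg : ℝ → ℝ)) (fun _ => measurable_neg)
    have hqX : ∀ i, (P[|Am]) {ω | -Y i ω = 1} = ENNReal.ofReal (q i) := by
      intro i
      have : {ω | -Y i ω = 1} = {ω | Y i ω = -1} := by
        ext ω; constructor <;> intro h <;> simp only [Set.mem_setOf_eq] at h ⊢ <;> linarith
      rw [this]; exact hqMinus i
    have hb := maj_vote_err (P[|Am]) s hs (fun i ω => -Y i ω) q hq
      (fun i => (hYmeas i).neg) (fun i ω => by rcases hYval i ω with h | h <;> simp [h])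
      hqX hind'
    refine le_trans (measure_mono ?_) hb
    intro ω hω
    simp only [Set.mem_setOf_eq] at hω ⊢
    rw [Finset.sum_neg_distrib]
    linarith
  -- relate conditional and joint probabilities
  have key : ∀ (B : Set Ω) (C : Set Ω), MeasurableSet C → P C ≠ 0 →
      P (C ∩ B) = P C * (P[|C]) B := by
    intro B C hC h0
    rw [cond_apply hC, ← mul_assoc, ENNReal.mul_inv_cancel h0 (measure_ne_top P C), one_mul]
  calc P ((A ∩ {ω | ∑ i, Y i ω ≤ 0}) ∪ (Am ∩ {ω | 0 < ∑ i, Y i ω}))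
      ≤ P (A ∩ {ω | ∑ i, Y i ω ≤ 0}) + P (Am ∩ {ω | 0 < ∑ i, Y i ω}) := measure_union_le _ _
    _ = P A * (P[|A]) {ω | ∑ i, Y i ω ≤ 0} + P Am * (P[|Am]) {ω | 0 < ∑ i, Y i ω} := by
        rw [key _ _ hAmeas hA0, key _ _ hAmmeas hAm0]
    _ ≤ ENNReal.ofReal (1 / 2) * ENNReal.ofReal (Real.exp (-(∑ i, (2 * q i - 1)) ^ 2 / (2 * s)))
        + ENNReal.ofReal (1 / 2) *
          ENNReal.ofReal (Real.exp (-(∑ i, (2 * q i - 1)) ^ 2 / (2 * s))) := by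
        rw [hPA, hPAm]
        exact add_le_add (mul_le_mul_right bound1 _) (mul_le_mul_right bound2 _)
    _ = ENNReal.ofReal (Real.exp (-(∑ i, (2 * q i - 1)) ^ 2 / (2 * s))) := by
        rw [← ENNReal.ofReal_mul (by norm_num), ← ENNReal.ofReal_add (by positivity) (by positivity)]
        congr 1
        ring
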